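/- Let t ≥ 1, k ≥ 2, p ≥ 1 and ℓ be integers with 1 ≤ ℓ ≤ k−1. Let U_1, …, U_{t+k} be finite sets with |U_i| = p+1 for every i, and suppose that every k-element subfamily of {U_1, …, U_{t+k}} has duplication number at most k−ℓ−1. Let b be the maximum, over all (t+1)-element subfamilies of {U_1, …, U_{t+k}}, of the duplication number of the subfamily. Then Σ_{i=1}^{t+k} |U_i| − |U_1 ∪ ⋯ ∪ U_{t+k}| ≤ k − ℓ − 1 + b. -/

import Mathlib

/-- The duplication number of the subfamily of `U` indexed by `S`. -/
def dupNumber {ι α : Type*} [DecidableEq α] (U : ι → Finset α) (S : Finset ι) : ℕ :=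
  ∑ i ∈ S, (U i).card - (S.biUnion U).card

section Aux

variable {ι α : Type*} [DecidableEq ι] [DecidableEq α]

lemma dup_insert (U : ι → Finset α) {S : Finset ι} {w : ι} (hw : w ∉ S) :
    dupNumber U (insert w S) = dupNumber U S + ((U w) ∩ S.biUnion U).card := by
  have h1 := Finset.card_union_add_card_inter (U w) (S.biUnion U)
  have h2 : (S.biUnion U).card ≤ ∑ i ∈ S, (U i).card := Finset.card_biUnion_le
  unfold dupNumber
  rw [Finset.sum_insert hw, Finset.biUnion_insert]
  omega

lemma dup_mono (U : ι → Finset α) {S T : Finset ι} (h : S ⊆ T) :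
    dupNumber U S ≤ dupNumber U T := by
  have hsub : T.biUnion U ⊆ S.biUnion U ∪ (T \ S).biUnion U := by
    intro x hx
    obtain ⟨i, hi, hxi⟩ := Finset.mem_biUnion.mp hx
    by_cases hiS : i ∈ S
    · exact Finset.mem_union_left _ (Finset.mem_biUnion.mpr ⟨i, hiS, hxi⟩)
    · exact Finset.mem_union_right _
        (Finset.mem_biUnion.mpr ⟨i, Finset.mem_sdiff.mpr ⟨hi, hiS⟩, hxi⟩)
  have h1 : (T.biUnion U).card ≤ (S.biUnion U).card + ((T \ S).biUnion U).card :=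
    le_trans (Finset.card_le_card hsub) (Finset.card_union_le _ _)
  have h2 : ((T \ S).biUnion U).card ≤ ∑ i ∈ T \ S, (U i).card := Finset.card_biUnion_le
  have h3 : (S.biUnion U).card ≤ ∑ i ∈ S, (U i).card := Finset.card_biUnion_le
  have h4 : ∑ i ∈ T \ S, (U i).card + ∑ i ∈ S, (U i).card = ∑ i ∈ T, (U i).card :=
    Finset.sum_sdiff h
  unfold dupNumber
  omega

lemma dup_union_of_disjoint (U : ι → Finset α) {A B : Finset ι} (hAB : Disjoint A B)
    (hU : Disjoint (A.biUnion U) (B.biUnion U)) :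
    dupNumber U (A ∪ B) = dupNumber U A + dupNumber U B := by
  have hbu : (A ∪ B).biUnion U = A.biUnion U ∪ B.biUnion U := by
    ext x
    simp only [Finset.mem_biUnion, Finset.mem_union]
    constructor
    · rintro ⟨i, hi | hi, hx⟩
      · exact Or.inl ⟨i, hi, hx⟩
      · exact Or.inr ⟨i, hi, hx⟩
    · rintro (⟨i, hi, hx⟩ | ⟨i, hi, hx⟩)
      · exact ⟨i, Or.inl hi, hx⟩
      · exact ⟨i, Or.inr hi, hx⟩
  have h1 : ((A ∪ B).biUnion U).card = (A.biUnion U).card + (B.biUnion U).card := by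
    rw [hbu, Finset.card_union_of_disjoint hU]
  have h2 : (A.biUnion U).card ≤ ∑ i ∈ A, (U i).card := Finset.card_biUnion_le
  have h3 : (B.biUnion U).card ≤ ∑ i ∈ B, (U i).card := Finset.card_biUnion_le
  have h4 : ∑ i ∈ A ∪ B, (U i).card = ∑ i ∈ A, (U i).card + ∑ i ∈ B, (U i).card :=
    Finset.sum_union hAB
  unfold dupNumber
  omega

/-- A family indexed by `S` is chained if it can be built starting from a single set,
adding at each step an index whose set meets the union of the current ones. -/
inductive Chained (U : ι → Finset α) : Finset ι → Prop
  | single (v : ι) : Chained U {v}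
  | grow {S : Finset ι} {w : ι} (hS : Chained U S) (hw : w ∉ S)
      (hint : ((U w) ∩ S.biUnion U).Nonempty) : Chained U (insert w S)

lemma Chained.nonempty' {U : ι → Finset α} {S : Finset ι} (h : Chained U S) : S.Nonempty := by
  induction h with
  | single v => exact ⟨v, Finset.mem_singleton_self v⟩
  | grow hS hw hint ih => exact Finset.insert_nonempty _ _

lemma Chained.card_le {U : ι → Finset α} {S : Finset ι} (h : Chained U S) :
    S.card ≤ dupNumber U S + 1 := by
  induction h with
  | single v => simp [dupNumber]
  | grow hS hw hint ih =>
    rename_i S w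
    rw [Finset.card_insert_of_notMem hw, dup_insert U hw]
    have := Finset.card_pos.mpr hint
    omega

lemma Chained.exists_sub {U : ι → Finset α} {S : Finset ι} (h : Chained U S) :
    ∀ σ, 1 ≤ σ → σ ≤ S.card → ∃ S', S' ⊆ S ∧ Chained U S' ∧ S'.card = σ := by
  induction h with
  | single v =>
    intro σ h1 h2
    simp only [Finset.card_singleton] at h2
    have : σ = 1 := by omega
    subst this
    exact ⟨{v}, Finset.Subset.refl _, Chained.single v, Finset.card_singleton v⟩
  | grow hS hw hint ih =>
    rename_i S w
    intro σ h1 h2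
    rw [Finset.card_insert_of_notMem hw] at h2
    by_cases hσ : σ ≤ S.card
    · obtain ⟨S', hsub, hch, hcard⟩ := ih σ h1 hσ
      exact ⟨S', hsub.trans (Finset.subset_insert _ _), hch, hcard⟩
    · refine ⟨insert w S, Finset.Subset.refl _, Chained.grow hS hw hint, ?_⟩
      rw [Finset.card_insert_of_notMem hw]
      omega

/-- Any finite index set can be partitioned into chained clusters with pairwise
disjoint index sets and pairwise disjoint unions. -/
lemma exists_clusters (U : ι → Finset α) :
    ∀ (N : ℕ) (V : Finset ι), V.card ≤ N → ∃ 𝒞 : Finset (Finset ι),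
      (∀ C ∈ 𝒞, Chained U C ∧ C ⊆ V) ∧
      (∀ C ∈ 𝒞, ∀ D ∈ 𝒞, C ≠ D → Disjoint C D ∧ Disjoint (C.biUnion U) (D.biUnion U)) ∧
      𝒞.biUnion id = V := by
  intro N
  induction N with
  | zero =>
    intro V hV
    have : V = ∅ := Finset.card_eq_zero.mp (Nat.le_zero.mp hV)
    subst this
    exact ⟨∅, by simp, by simp, by simp⟩
  | succ N ihN =>
    intro V hV
    rcases V.eq_empty_or_nonempty with rfl | ⟨v, hv⟩
    · exact ⟨∅, by simp, by simp, by simp⟩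
    · classical
      set P := V.powerset.filter (fun C => v ∈ C ∧ Chained U C) with hPdef
      have hPne : ({v} : Finset ι) ∈ P := by
        rw [hPdef, Finset.mem_filter, Finset.mem_powerset]
        exact ⟨Finset.singleton_subset_iff.mpr hv, Finset.mem_singleton_self v,
          Chained.single v⟩
      obtain ⟨C, hCP, hCmax⟩ := P.exists_max_image Finset.card ⟨{v}, hPne⟩
      rw [hPdef, Finset.mem_filter, Finset.mem_powerset] at hCP
      obtain ⟨hCV, hvC, hCch⟩ := hCP
      have hkey : ∀ w ∈ V, w ∉ C → ((U w) ∩ C.biUnion U) = ∅ := by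
        intro w hwV hwC
        by_contra hne
        have hne' : ((U w) ∩ C.biUnion U).Nonempty := Finset.nonempty_iff_ne_empty.mpr hne
        have hmem : insert w C ∈ P := by
          rw [hPdef, Finset.mem_filter, Finset.mem_powerset]
          exact ⟨Finset.insert_subset hwV hCV, Finset.mem_insert_of_mem hvC,
            Chained.grow hCch hwC hne'⟩
        have := hCmax _ hmem
        rw [Finset.card_insert_of_notMem hwC] at this
        omega
      have hCcard : 1 ≤ C.card := Finset.card_pos.mpr ⟨v, hvC⟩
      have hVC : (V \ C).card ≤ N := by
        rw [Finset.card_sdiff_of_subset hCV]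
        omega
      obtain ⟨𝒞', h1', h2', h3'⟩ := ihN (V \ C) hVC
      have hC𝒞' : ∀ D ∈ 𝒞', Disjoint C D ∧ Disjoint (C.biUnion U) (D.biUnion U) := by
        intro D hD
        have hDV : D ⊆ V \ C := (h1' D hD).2
        constructor
        · rw [Finset.disjoint_left]
          intro x hxC hxD
          exact (Finset.mem_sdiff.mp (hDV hxD)).2 hxC
        · rw [Finset.disjoint_left]
          intro x hxC hxD
          obtain ⟨i, hiD, hxi⟩ := Finset.mem_biUnion.mp hxD
          have hiVC := Finset.mem_sdiff.mp (hDV hiD)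
          have := hkey i hiVC.1 hiVC.2
          have : x ∈ ((U i) ∩ C.biUnion U) := Finset.mem_inter.mpr ⟨hxi, hxC⟩
          rw [hkey i hiVC.1 hiVC.2] at this
          exact absurd this (Finset.notMem_empty x)
      refine ⟨insert C 𝒞', ?_, ?_, ?_⟩
      · intro D hD
        rcases Finset.mem_insert.mp hD with rfl | hD'
        · exact ⟨hCch, hCV⟩
        · exact ⟨(h1' D hD').1, ((h1' D hD').2).trans (Finset.sdiff_subset)⟩
      · intro C1 hC1 C2 hC2 hne
        rcases Finset.mem_insert.mp hC1 with rfl | hC1' <;>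
          rcases Finset.mem_insert.mp hC2 with h2eq | hC2'
        · exact absurd h2eq.symm hne
        · exact hC𝒞' C2 hC2'
        · subst h2eq
          exact ⟨(hC𝒞' C1 hC1').1.symm, (hC𝒞' C1 hC1').2.symm⟩
        · exact h2' C1 hC1' C2 hC2' hne
      · rw [Finset.biUnion_insert]
        simp only [id]
        rw [h3', Finset.union_sdiff_of_subset hCV]

/-- dup is additive over a family with pairwise disjoint indices and unions. -/
lemma dup_family (U : ι → Finset α) :
    ∀ 𝒟 : Finset (Finset ι),
      (∀ C ∈ 𝒟, ∀ D ∈ 𝒟, C ≠ D → Disjoint C D ∧ Disjoint (C.biUnion U) (D.biUnion U)) →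
      dupNumber U (𝒟.biUnion id) = ∑ C ∈ 𝒟, dupNumber U C := by
  intro 𝒟
  induction 𝒟 using Finset.induction_on with
  | empty => simp [dupNumber]
  | insert A 𝒟' hA ih =>
    intro hpair
    have hres : ∀ C ∈ 𝒟', ∀ D ∈ 𝒟', C ≠ D →
        Disjoint C D ∧ Disjoint (C.biUnion U) (D.biUnion U) := by
      intro C hC D hD hne
      exact hpair C (Finset.mem_insert_of_mem hC) D (Finset.mem_insert_of_mem hD) hne
    have hAD : ∀ D ∈ 𝒟', Disjoint A D ∧ Disjoint (A.biUnion U) (D.biUnion U) := by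
      intro D hD
      refine hpair A (Finset.mem_insert_self _ _) D (Finset.mem_insert_of_mem hD) ?_
      rintro rfl; exact hA hD
    have hd1 : Disjoint A (𝒟'.biUnion id) := by
      rw [Finset.disjoint_biUnion_right]
      intro D hD
      exact (hAD D hD).1
    have hd2 : Disjoint (A.biUnion U) ((𝒟'.biUnion id).biUnion U) := by
      rw [Finset.disjoint_left]
      intro x hxA hx
      obtain ⟨i, hi, hxi⟩ := Finset.mem_biUnion.mp hx
      obtain ⟨D, hD, hiD⟩ := Finset.mem_biUnion.mp hi
      have : x ∈ D.biUnion U := Finset.mem_biUnion.mpr ⟨i, hiD, hxi⟩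
      exact (Finset.disjoint_left.mp (hAD D hD).2) hxA this
    rw [Finset.biUnion_insert]
    simp only [id] at *
    rw [dup_union_of_disjoint U hd1 hd2, Finset.sum_insert hA, ih hres]

/-- card is additive over a family with pairwise disjoint indices. -/
lemma card_family (U : ι → Finset α) {𝒟 : Finset (Finset ι)}
    (hpair : ∀ C ∈ 𝒟, ∀ D ∈ 𝒟, C ≠ D →
      Disjoint C D ∧ Disjoint (C.biUnion U) (D.biUnion U)) :
    (𝒟.biUnion id).card = ∑ C ∈ 𝒟, C.card := by
  have h := Finset.card_biUnion (s := 𝒟) (t := id)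
    (fun x hx y hy hxy => (hpair x hx y hy hxy).1)
  simpa using h

end Aux

theorem stmt17 {α : Type*} [DecidableEq α] (t k p ℓ : ℕ)
    (ht : 1 ≤ t) (hk : 2 ≤ k) (hp : 1 ≤ p) (hℓ1 : 1 ≤ ℓ) (hℓ2 : ℓ ≤ k - 1)
    (U : Fin (t + k) → Finset α) (hcard : ∀ i, (U i).card = p + 1)
    (hdup : ∀ S : Finset (Fin (t + k)), S.card = k → dupNumber U S ≤ k - ℓ - 1)
    (b : ℕ)
    (hb : IsGreatest {d | ∃ S : Finset (Fin (t + k)), S.card = t + 1 ∧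
      d = dupNumber U S} b) :
    ∑ i, (U i).card - (Finset.univ.biUnion U).card ≤ k - ℓ - 1 + b := by
  classical
  show dupNumber U Finset.univ ≤ k - ℓ - 1 + b
  have hunivcard : (Finset.univ : Finset (Fin (t + k))).card = t + k := by
    simp [Finset.card_univ]
  -- padding bound : any index set of size ≤ k has dup ≤ k - ℓ - 1
  have keybound : ∀ B : Finset (Fin (t + k)), B.card ≤ k → dupNumber U B ≤ k - ℓ - 1 := by
    intro B hB
    obtain ⟨K, hBK, hKuniv, hK⟩ := Finset.exists_subsuperset_card_eq
      (Finset.subset_univ B) hB (by omega)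
    exact le_trans (dup_mono U hBK) (hdup K hK)
  -- cluster decomposition of univ
  obtain ⟨𝒞, hmem, hpair, huniv⟩ :=
    exists_clusters U (t + k) Finset.univ (le_of_eq hunivcard)
  have hchain : ∀ C ∈ 𝒞, Chained U C := fun C hC => (hmem C hC).1
  have hCne : ∀ C ∈ 𝒞, C.Nonempty := fun C hC => (hchain C hC).nonempty'
  have hdupsum : dupNumber U Finset.univ = ∑ C ∈ 𝒞, dupNumber U C := by
    rw [← huniv]; exact dup_family U 𝒞 hpair
  have hcardsum : ∑ C ∈ 𝒞, C.card = t + k := by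
    rw [← card_family U hpair, huniv, hunivcard]
  -- choose a maximal packing J with total size ≤ t+1
  set P := 𝒞.powerset.filter (fun J => ∑ C ∈ J, C.card ≤ t + 1) with hPdef
  have hPne : (∅ : Finset (Finset (Fin (t + k)))) ∈ P := by
    rw [hPdef, Finset.mem_filter, Finset.mem_powerset]
    simp
  obtain ⟨J, hJP, hJmax⟩ := P.exists_max_image (fun J => ∑ C ∈ J, C.card) ⟨∅, hPne⟩
  rw [hPdef, Finset.mem_filter, Finset.mem_powerset] at hJP
  obtain ⟨hJ𝒞, hJle⟩ := hJP
  set L := 𝒞 \ J with hLdef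
  have hL𝒞 : L ⊆ 𝒞 := Finset.sdiff_subset
  have hsplitc : ∑ C ∈ L, C.card + ∑ C ∈ J, C.card = t + k := by
    rw [hLdef, Finset.sum_sdiff hJ𝒞, hcardsum]
  have hsplitd : ∑ C ∈ L, dupNumber U C + ∑ C ∈ J, dupNumber U C
      = ∑ C ∈ 𝒞, dupNumber U C := by
    rw [hLdef]; exact Finset.sum_sdiff hJ𝒞
  -- pairwise property restricted to subfamilies
  have hpairsub : ∀ 𝒟 : Finset (Finset (Fin (t + k))), 𝒟 ⊆ 𝒞 →
      ∀ C ∈ 𝒟, ∀ D ∈ 𝒟, C ≠ D →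
        Disjoint C D ∧ Disjoint (C.biUnion U) (D.biUnion U) :=
    fun 𝒟 h𝒟 C hC D hD hne => hpair C (h𝒟 hC) D (h𝒟 hD) hne
  rcases eq_or_lt_of_le hJle with hc0 | hclt
  · -- exact fit : J has total size t+1
    have hpairJ := hpairsub J hJ𝒞
    have hdupB1 : dupNumber U (J.biUnion id) = ∑ C ∈ J, dupNumber U C := dup_family U J hpairJ
    have hcardB1 : (J.biUnion id).card = t + 1 := by
      rw [card_family U hpairJ]; exact hc0
    have hb1 : ∑ C ∈ J, dupNumber U C ≤ b := by
      rw [← hdupB1]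
      exact hb.2 ⟨J.biUnion id, hcardB1, rfl⟩
    have hpairL := hpairsub L hL𝒞
    have hdupB2 : dupNumber U (L.biUnion id) = ∑ C ∈ L, dupNumber U C := dup_family U L hpairL
    have hcardB2 : (L.biUnion id).card = ∑ C ∈ L, C.card := card_family U hpairL
    have hkey2 : ∑ C ∈ L, dupNumber U C ≤ k - ℓ - 1 := by
      rw [← hdupB2]
      exact keybound _ (by omega)
    omega
  · -- ΣJ ≤ t ; let c = t+1-ΣJ ≥ 1
    have hJt : ∑ C ∈ J, C.card ≤ t := by omega
    have hbig : ∀ C ∈ L, t + 1 < ∑ C' ∈ J, C'.card + C.card := by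
      intro C hC
      by_contra hle
      push_neg at hle
      have hCJ : C ∉ J := (Finset.mem_sdiff.mp hC).2
      have hmemP : insert C J ∈ P := by
        rw [hPdef, Finset.mem_filter, Finset.mem_powerset]
        constructor
        · exact Finset.insert_subset (hL𝒞 hC) hJ𝒞
        · rw [Finset.sum_insert hCJ]; omega
      have := hJmax _ hmemP
      rw [Finset.sum_insert hCJ] at this
      have hCpos : 1 ≤ C.card := Finset.card_pos.mpr (hCne C (hL𝒞 hC))
      omega
    by_cases hex : ∃ C ∈ L, dupNumber U C + 1 ≤ C.card
    · -- there is a "tree" cluster in L : split it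
      obtain ⟨Cs, hCsL, hCstree⟩ := hex
      have hCs𝒞 : Cs ∈ 𝒞 := hL𝒞 hCsL
      set m := Cs.card with hmdef
      set c := t + 1 - ∑ C ∈ J, C.card with hcdef
      have hc1 : 1 ≤ c := by omega
      have hcm : c < m := by
        have := hbig Cs hCsL
        omega
      -- chained subsets A1 (size c) and A2 (size m+1-c) of Cs
      obtain ⟨A1, hA1sub, hA1ch, hA1card⟩ :=
        (hchain Cs hCs𝒞).exists_sub c hc1 (by omega)
      obtain ⟨A2, hA2sub, hA2ch, hA2card⟩ :=
        (hchain Cs hCs𝒞).exists_sub (m + 1 - c) (by omega) (by omega)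
      have hA1ne : A1.Nonempty := Finset.card_pos.mp (by omega)
      have hA2ne : A2.Nonempty := Finset.card_pos.mp (by omega)
      -- B1 = J together with A1
      have hAprem1 : ∀ D ∈ J, Disjoint A1 D ∧ Disjoint (A1.biUnion U) (D.biUnion U) := by
        intro D hD
        have hne : Cs ≠ D := by
          rintro rfl
          exact (Finset.mem_sdiff.mp hCsL).2 hD
        have h := hpair Cs hCs𝒞 D (hJ𝒞 hD) hne
        exact ⟨h.1.mono_left hA1sub,
          h.2.mono_left (Finset.biUnion_subset_biUnion_of_subset_left U hA1sub)⟩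
      have hA1J : A1 ∉ J := by
        intro hmem'
        have h0 : A1 = ⊥ := disjoint_self.mp (hAprem1 A1 hmem').1
        rw [Finset.bot_eq_empty] at h0
        rw [h0] at hA1ne
        exact absurd hA1ne (by simp)
      have hpairB1 : ∀ C ∈ insert A1 J, ∀ D ∈ insert A1 J, C ≠ D →
          Disjoint C D ∧ Disjoint (C.biUnion U) (D.biUnion U) := by
        intro C hC D hD hne
        rcases Finset.mem_insert.mp hC with rfl | hC' <;>
          rcases Finset.mem_insert.mp hD with h2 | hD'
        · exact absurd h2.symm hne
        · exact hAprem1 D hD'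
        · subst h2
          exact ⟨(hAprem1 C hC').1.symm, (hAprem1 C hC').2.symm⟩
        · exact hpairsub J hJ𝒞 C hC' D hD' hne
      have hdupB1 : dupNumber U ((insert A1 J).biUnion id)
          = dupNumber U A1 + ∑ C ∈ J, dupNumber U C := by
        rw [dup_family U _ hpairB1, Finset.sum_insert hA1J]
      have hcardB1 : ((insert A1 J).biUnion id).card = t + 1 := by
        rw [card_family U hpairB1, Finset.sum_insert hA1J]
        omega
      have hb1 : dupNumber U A1 + ∑ C ∈ J, dupNumber U C ≤ b := by
        rw [← hdupB1]
        exact hb.2 ⟨(insert A1 J).biUnion id, hcardB1, rfl⟩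
      -- B2 = (L minus Cs) together with A2
      have hLer𝒞 : L.erase Cs ⊆ 𝒞 := (Finset.erase_subset _ _).trans hL𝒞
      have hAprem2 : ∀ D ∈ L.erase Cs,
          Disjoint A2 D ∧ Disjoint (A2.biUnion U) (D.biUnion U) := by
        intro D hD
        have hne : Cs ≠ D := (Finset.ne_of_mem_erase hD).symm
        have h := hpair Cs hCs𝒞 D (hLer𝒞 hD) hne
        exact ⟨h.1.mono_left hA2sub,
          h.2.mono_left (Finset.biUnion_subset_biUnion_of_subset_left U hA2sub)⟩
      have hA2er : A2 ∉ L.erase Cs := by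
        intro hmem'
        have h0 : A2 = ⊥ := disjoint_self.mp (hAprem2 A2 hmem').1
        rw [Finset.bot_eq_empty] at h0
        rw [h0] at hA2ne
        exact absurd hA2ne (by simp)
      have hpairB2 : ∀ C ∈ insert A2 (L.erase Cs), ∀ D ∈ insert A2 (L.erase Cs), C ≠ D →
          Disjoint C D ∧ Disjoint (C.biUnion U) (D.biUnion U) := by
        intro C hC D hD hne
        rcases Finset.mem_insert.mp hC with rfl | hC' <;>
          rcases Finset.mem_insert.mp hD with h2 | hD'
        · exact absurd h2.symm hne
        · exact hAprem2 D hD'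
        · subst h2
          exact ⟨(hAprem2 C hC').1.symm, (hAprem2 C hC').2.symm⟩
        · exact hpairsub _ hLer𝒞 C hC' D hD' hne
      have herasec : ∑ C ∈ L.erase Cs, C.card + Cs.card = ∑ C ∈ L, C.card :=
        Finset.sum_erase_add _ _ hCsL
      have herased : ∑ C ∈ L.erase Cs, dupNumber U C + dupNumber U Cs
          = ∑ C ∈ L, dupNumber U C :=
        Finset.sum_erase_add _ _ hCsL
      have hdupB2 : dupNumber U ((insert A2 (L.erase Cs)).biUnion id)
          = dupNumber U A2 + ∑ C ∈ L.erase Cs, dupNumber U C := by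
        rw [dup_family U _ hpairB2, Finset.sum_insert hA2er]
      have hcardB2 : ((insert A2 (L.erase Cs)).biUnion id).card = k := by
        rw [card_family U hpairB2, Finset.sum_insert hA2er]
        omega
      have hkey2 : dupNumber U A2 + ∑ C ∈ L.erase Cs, dupNumber U C ≤ k - ℓ - 1 := by
        rw [← hdupB2]
        exact keybound _ (le_of_eq hcardB2)
      have hch1 := hA1ch.card_le
      have hch2 := hA2ch.card_le
      omega
    · -- all clusters in L have dup ≥ card : contradiction with a k-window
      exfalso
      push_neg at hex
      have hall : ∀ C ∈ L, C.card ≤ dupNumber U C := by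
        intro C hC
        have h1 := hex C hC
        omega
      -- minimal subfamily L' of L with total size ≥ k
      set Q := L.powerset.filter (fun L' => k ≤ ∑ C ∈ L', C.card) with hQdef
      have hLQ : L ∈ Q := by
        rw [hQdef, Finset.mem_filter, Finset.mem_powerset]
        exact ⟨Finset.Subset.refl _, by omega⟩
      obtain ⟨L', hL'Q, hL'min⟩ := Q.exists_min_image (fun L' => ∑ C ∈ L', C.card) ⟨L, hLQ⟩
      rw [hQdef, Finset.mem_filter, Finset.mem_powerset] at hL'Q
      obtain ⟨hL'L, hL'k⟩ := hL'Q
      have hL'ne : L'.Nonempty := by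
        rcases Finset.eq_empty_or_nonempty L' with rfl | h
        · simp at hL'k; omega
        · exact h
      obtain ⟨C0, hC0⟩ := hL'ne
      have hC0𝒞 : C0 ∈ 𝒞 := hL𝒞 (hL'L hC0)
      have hC0pos : 1 ≤ C0.card := Finset.card_pos.mpr (hCne C0 hC0𝒞)
      have hermin : ∑ C ∈ L'.erase C0, C.card + C0.card = ∑ C ∈ L', C.card :=
        Finset.sum_erase_add _ _ hC0
      have hernotQ : ∑ C ∈ L'.erase C0, C.card < k := by
        by_contra hcon
        push_neg at hcon
        have hmem' : L'.erase C0 ∈ Q := by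
          rw [hQdef, Finset.mem_filter, Finset.mem_powerset]
          exact ⟨(Finset.erase_subset _ _).trans hL'L, hcon⟩
        have := hL'min _ hmem'
        omega
      set σ := k - ∑ C ∈ L'.erase C0, C.card with hσdef
      have hσ1 : 1 ≤ σ := by omega
      have hσC0 : σ ≤ C0.card := by omega
      obtain ⟨S0, hS0sub, hS0ch, hS0card⟩ := (hchain C0 hC0𝒞).exists_sub σ hσ1 hσC0
      have hS0ne : S0.Nonempty := Finset.card_pos.mp (by omega)
      have hLer𝒞 : L'.erase C0 ⊆ 𝒞 := ((Finset.erase_subset _ _).trans hL'L).trans hL𝒞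
      have hAprem : ∀ D ∈ L'.erase C0,
          Disjoint S0 D ∧ Disjoint (S0.biUnion U) (D.biUnion U) := by
        intro D hD
        have hne : C0 ≠ D := (Finset.ne_of_mem_erase hD).symm
        have h := hpair C0 hC0𝒞 D (hLer𝒞 hD) hne
        exact ⟨h.1.mono_left hS0sub,
          h.2.mono_left (Finset.biUnion_subset_biUnion_of_subset_left U hS0sub)⟩
      have hS0er : S0 ∉ L'.erase C0 := by
        intro hmem'
        have h0 : S0 = ⊥ := disjoint_self.mp (hAprem S0 hmem').1
        rw [Finset.bot_eq_empty] at h0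
        rw [h0] at hS0ne
        exact absurd hS0ne (by simp)
      have hpairB : ∀ C ∈ insert S0 (L'.erase C0), ∀ D ∈ insert S0 (L'.erase C0), C ≠ D →
          Disjoint C D ∧ Disjoint (C.biUnion U) (D.biUnion U) := by
        intro C hC D hD hne
        rcases Finset.mem_insert.mp hC with rfl | hC' <;>
          rcases Finset.mem_insert.mp hD with h2 | hD'
        · exact absurd h2.symm hne
        · exact hAprem D hD'
        · subst h2
          exact ⟨(hAprem C hC').1.symm, (hAprem C hC').2.symm⟩
        · exact hpairsub _ hLer𝒞 C hC' D hD' hne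
      have hdupB : dupNumber U ((insert S0 (L'.erase C0)).biUnion id)
          = dupNumber U S0 + ∑ C ∈ L'.erase C0, dupNumber U C := by
        rw [dup_family U _ hpairB, Finset.sum_insert hS0er]
      have hcardB : ((insert S0 (L'.erase C0)).biUnion id).card = k := by
        rw [card_family U hpairB, Finset.sum_insert hS0er]
        omega
      have hkeyB : dupNumber U S0 + ∑ C ∈ L'.erase C0, dupNumber U C ≤ k - ℓ - 1 := by
        rw [← hdupB]
        exact keybound _ (le_of_eq hcardB)
      have hsumge : ∑ C ∈ L'.erase C0, C.card ≤ ∑ C ∈ L'.erase C0, dupNumber U C :=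
        Finset.sum_le_sum (fun C hC => hall C (hL'L (Finset.mem_of_mem_erase hC)))
      have hS0chain := hS0ch.card_le
      omega
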